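/- Let f¹, …, fᵐ : ℝⁿ → ℝ be convex functions such that every subgradient of fⁱ at any point has norm at most C_i, and set f = Σ_{i=1}^m fⁱ. Let λ ≥ 0, x ∈ ℝⁿ, and let z be the output of an incremental subgradient pass from x with stepsize λ. Then for every y ∈ ℝⁿ: ‖z − y‖² ≤ ‖x − y‖² − 2λ(f(z) − f(y)) + 3λ²(Σ_{i=1}^m C_i)². -/

import Mathlib

open Pointwise

open Filter Topology

/-- `v` is a subgradient of `f` at `x`. -/
def IsSubgrad {n : ℕ} (f : EuclideanSpace ℝ (Fin n) → ℝ)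
    (v x : EuclideanSpace ℝ (Fin n)) : Prop :=
  ∀ y, f y ≥ f x + inner ℝ v (y - x)

/-- `z` is the output of an incremental subgradient pass for `f 0, …, f (m-1)`
starting at `x` with stepsize `lam`. -/
def IsIncPass {n m : ℕ} (f : Fin m → (EuclideanSpace ℝ (Fin n) → ℝ))
    (lam : ℝ) (x z : EuclideanSpace ℝ (Fin n)) : Prop :=
  ∃ w : Fin (m + 1) → EuclideanSpace ℝ (Fin n),
    w 0 = x ∧ w (Fin.last m) = z ∧
    ∀ i : Fin m, ∃ v, IsSubgrad (f i) v (w i.castSucc) ∧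
      w i.succ = w i.castSucc - lam • v

section Helpers
variable {n : ℕ}

lemma line_convex {f : EuclideanSpace ℝ (Fin n) → ℝ} (hf : ConvexOn ℝ Set.univ f)
    (x d : EuclideanSpace ℝ (Fin n)) :
    ConvexOn ℝ Set.univ (fun t : ℝ => f (x + t • d)) := by
  have h := hf.comp_affineMap (AffineMap.lineMap x (x + d) : ℝ →ᵃ[ℝ] EuclideanSpace ℝ (Fin n))
  simp only [Set.preimage_univ] at h
  convert h using 2 with t
  exacts [rfl, rfl, rfl, rfl, by simp [AffineMap.lineMap_apply, add_comm]]

lemma slope_mono' {f : EuclideanSpace ℝ (Fin n) → ℝ} (hf : ConvexOn ℝ Set.univ f)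
    (x d : EuclideanSpace ℝ (Fin n)) {s t : ℝ} (hs : s ≠ 0) (ht : t ≠ 0) (hst : s ≤ t) :
    (f (x + s • d) - f x) / s ≤ (f (x + t • d) - f x) / t := by
  have h := (line_convex hf x d).secant_mono (Set.mem_univ (0:ℝ)) (Set.mem_univ s)
    (Set.mem_univ t) hs ht hst
  simpa using h

end Helpers

theorem exists_isSubgrad {f : EuclideanSpace ℝ (Fin n) → ℝ} (hf : ConvexOn ℝ Set.univ f)
    (x : EuclideanSpace ℝ (Fin n)) : ∃ v, IsSubgrad f v x := by
  classical
  set S : EuclideanSpace ℝ (Fin n) → Set ℝ :=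
    fun d => (fun t : ℝ => (f (x + t • d) - f x) / t) '' Set.Ioi 0 with hS
  have hmem : ∀ d (t : ℝ), 0 < t → (f (x + t • d) - f x) / t ∈ S d :=
    fun d t ht => ⟨t, ht, rfl⟩
  have hne : ∀ d, (S d).Nonempty := fun d => ⟨_, hmem d 1 one_pos⟩
  have hbdd : ∀ d, BddBelow (S d) := by
    intro d
    refine ⟨(f (x + (-1 : ℝ) • d) - f x) / (-1), ?_⟩
    rintro r ⟨t, ht, rfl⟩
    exact slope_mono' hf x d (by norm_num) (ne_of_gt ht) (by linarith [Set.mem_Ioi.mp ht])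
  set N : EuclideanSpace ℝ (Fin n) → ℝ := fun d => sInf (S d) with hN
  have hNle : ∀ d (t : ℝ), 0 < t → N d ≤ (f (x + t • d) - f x) / t := fun d t ht =>
    csInf_le (hbdd d) (hmem d t ht)
  -- positive homogeneity
  have hNhom : ∀ c : ℝ, 0 < c → ∀ d, N (c • d) = c * N d := by
    intro c hc d
    have hset : S (c • d) = c • (S d : Set ℝ) := by
      ext r
      constructor
      · rintro ⟨t, ht, rfl⟩
        have ht' : (0:ℝ) < t := ht
        refine ⟨(f (x + (t * c) • d) - f x) / (t * c), hmem d (t*c) (mul_pos ht' hc), ?_⟩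
        show c • ((f (x + (t * c) • d) - f x) / (t * c)) = (f (x + t • (c • d)) - f x) / t
        rw [smul_smul, smul_eq_mul]
        field_simp
      · rintro ⟨r', ⟨t, ht, rfl⟩, rfl⟩
        have ht' : (0:ℝ) < t := ht
        refine ⟨t / c, Set.mem_Ioi.mpr (div_pos ht' hc), ?_⟩
        show (f (x + (t / c) • (c • d)) - f x) / (t / c) = c • ((f (x + t • d) - f x) / t)
        rw [smul_smul, div_mul_cancel₀ _ (ne_of_gt hc), smul_eq_mul]
        field_simp
    rw [hN]
    simp only
    rw [hset, Real.sInf_smul_of_nonneg hc.le, smul_eq_mul]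
  -- subadditivity
  have hhalf : ∀ d₁ d₂ (r : ℝ), 0 < r →
      (f (x + (r/2) • (d₁ + d₂)) - f x) / (r/2)
        ≤ (f (x + r • d₁) - f x) / r + (f (x + r • d₂) - f x) / r := by
    intro d₁ d₂ r hr
    have hv : x + (r/2) • (d₁ + d₂)
        = (1/2 : ℝ) • (x + r • d₁) + (1/2 : ℝ) • (x + r • d₂) := by
      module
    have hcv := hf.2 (Set.mem_univ (x + r • d₁)) (Set.mem_univ (x + r • d₂))
      (by norm_num : (0:ℝ) ≤ 1/2) (by norm_num : (0:ℝ) ≤ 1/2) (by norm_num)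
    simp only [smul_eq_mul] at hcv
    rw [hv]
    rw [← add_div, div_le_div_iff₀ (by positivity) hr]
    nlinarith [hcv]
  have hNadd : ∀ d₁ d₂, N (d₁ + d₂) ≤ N d₁ + N d₂ := by
    intro d₁ d₂
    have key : ∀ a ∈ S d₁, ∀ b ∈ S d₂, N (d₁ + d₂) ≤ a + b := by
      rintro a ⟨s, hs, rfl⟩ b ⟨t, ht, rfl⟩
      have hs' : (0:ℝ) < s := hs
      have ht' : (0:ℝ) < t := ht
      set r := min s t with hr
      have hrpos : 0 < r := lt_min hs' ht'
      have h1 := slope_mono' hf x d₁ (ne_of_gt hrpos) (ne_of_gt hs') (min_le_left s t)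
      have h2 := slope_mono' hf x d₂ (ne_of_gt hrpos) (ne_of_gt ht') (min_le_right s t)
      have h0 := hNle (d₁ + d₂) (r/2) (by positivity)
      have h3 := hhalf d₁ d₂ r hrpos
      linarith
    rw [← sub_le_iff_le_add]
    refine le_csInf (hne d₁) ?_
    intro a ha
    rw [sub_le_iff_le_add, ← sub_le_iff_le_add']
    refine le_csInf (hne d₂) ?_
    intro b hb
    linarith [key a ha b hb]
  -- Hahn-Banach extension from the trivial subspace
  have hN0 : (0:ℝ) ≤ N 0 := by
    refine le_csInf (hne 0) ?_
    rintro r ⟨t, ht, rfl⟩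
    have ht' : (0:ℝ) < t := ht
    simp
  obtain ⟨g, -, hg⟩ := exists_extension_of_le_sublinear
    (⟨⊥, 0⟩ : (EuclideanSpace ℝ (Fin n)) →ₗ.[ℝ] ℝ) N hNhom hNadd
    (by
      rintro ⟨y, hy⟩
      rcases Submodule.mem_bot ℝ |>.mp hy with rfl
      simpa using hN0)
  set g' : EuclideanSpace ℝ (Fin n) →L[ℝ] ℝ := LinearMap.toContinuousLinearMap g with hg'
  refine ⟨(InnerProductSpace.toDual ℝ (EuclideanSpace ℝ (Fin n))).symm g', ?_⟩
  intro y
  have h1 : (inner ℝ ((InnerProductSpace.toDual ℝ (EuclideanSpace ℝ (Fin n))).symm g') (y - x) : ℝ)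
      = g (y - x) := InnerProductSpace.toDual_symm_apply
  have h2 : g (y - x) ≤ N (y - x) := hg _
  have h3 := hNle (y - x) 1 one_pos
  simp only [one_smul, add_sub_cancel, div_one] at h3
  rw [ge_iff_le, h1]
  linarith


section Rest
variable {n : ℕ}

lemma lip_of_subgrad_bound {f : EuclideanSpace ℝ (Fin n) → ℝ} (hf : ConvexOn ℝ Set.univ f)
    {c : ℝ} (hc : ∀ z v, IsSubgrad f v z → ‖v‖ ≤ c) (a b : EuclideanSpace ℝ (Fin n)) :
    f a - f b ≤ c * ‖a - b‖ := by
  obtain ⟨u, hu⟩ := exists_isSubgrad hf a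
  have h1 := hu b
  have hneg : (inner ℝ u (b - a) : ℝ) = - inner ℝ u (a - b) := by
    rw [← neg_sub a b, inner_neg_right]
  have hiz : (inner ℝ u (a - b) : ℝ) ≤ ‖u‖ * ‖a - b‖ := real_inner_le_norm u (a - b)
  have h3 : ‖u‖ ≤ c := hc a u hu
  have h4 : ‖u‖ * ‖a - b‖ ≤ c * ‖a - b‖ :=
    mul_le_mul_of_nonneg_right h3 (norm_nonneg _)
  rw [ge_iff_le, hneg] at h1
  linarith

lemma incPass_tail {m : ℕ} {f : Fin (m+1) → (EuclideanSpace ℝ (Fin n) → ℝ)} {lam : ℝ}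
    {x z : EuclideanSpace ℝ (Fin n)} (h : IsIncPass f lam x z) :
    ∃ v, IsSubgrad (f 0) v x ∧ IsIncPass (fun i => f i.succ) lam (x - lam • v) z := by
  obtain ⟨w, hw0, hwl, hstep⟩ := h
  obtain ⟨v, hv, hstep0⟩ := hstep 0
  rw [show ((0 : Fin (m+1)).castSucc) = 0 from rfl, hw0] at hv hstep0
  refine ⟨v, hv, ⟨fun i => w i.succ, ?_, ?_, ?_⟩⟩
  · exact hstep0
  · show w (Fin.last m).succ = z
    rw [Fin.succ_last]; exact hwl
  · intro i
    obtain ⟨u, hu, hs⟩ := hstep i.succ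
    rw [← Fin.succ_castSucc] at hu hs
    exact ⟨u, hu, hs⟩

lemma incPass_dist : ∀ {m : ℕ} (f : Fin m → (EuclideanSpace ℝ (Fin n) → ℝ)) (C : Fin m → ℝ),
    (∀ i, ∀ z v, IsSubgrad (f i) v z → ‖v‖ ≤ C i) → ∀ {lam : ℝ}, 0 ≤ lam →
    ∀ {x z : EuclideanSpace ℝ (Fin n)}, IsIncPass f lam x z →
    ‖z - x‖ ≤ lam * ∑ i, C i := by
  intro m
  induction m with
  | zero =>
    intro f C hC lam hlam x z hpass
    obtain ⟨w, hw0, hwl, -⟩ := hpass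
    have hz : z = x := by rw [← hw0, ← hwl]; rfl
    simp [hz]
  | succ m ih =>
    intro f C hC lam hlam x z hpass
    obtain ⟨v, hv, hpass'⟩ := incPass_tail hpass
    have hd := ih (fun i => f i.succ) (fun i => C i.succ) (fun i => hC i.succ) hlam hpass'
    have hC0 : ‖v‖ ≤ C 0 := hC 0 x v hv
    have heq : z - x = (z - (x - lam • v)) + (- (lam • v)) := by abel
    have hnv : ‖lam • v‖ ≤ lam * C 0 := by
      rw [norm_smul, Real.norm_eq_abs, abs_of_nonneg hlam]
      exact mul_le_mul_of_nonneg_left hC0 hlam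
    calc ‖z - x‖ ≤ ‖z - (x - lam • v)‖ + ‖-(lam • v)‖ := by rw [heq]; exact norm_add_le _ _
      _ ≤ lam * (∑ i : Fin m, C i.succ) + lam * C 0 := by
          rw [norm_neg]; exact add_le_add hd hnv
      _ = lam * ∑ i, C i := by rw [Fin.sum_univ_succ]; ring

end Rest

section Main
variable {n : ℕ}

lemma main_aux : ∀ (m : ℕ) (f : Fin m → (EuclideanSpace ℝ (Fin n) → ℝ)),
    (∀ i, ConvexOn ℝ Set.univ (f i)) →
    ∀ (C : Fin m → ℝ), (∀ i, ∀ z v, IsSubgrad (f i) v z → ‖v‖ ≤ C i) →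
    ∀ {lam : ℝ}, 0 ≤ lam →
    ∀ {x z : EuclideanSpace ℝ (Fin n)}, IsIncPass f lam x z →
    ∀ y, ‖z - y‖ ^ 2 ≤ ‖x - y‖ ^ 2 - 2 * lam * ((∑ i, f i z) - ∑ i, f i y)
      + 3 * lam ^ 2 * (∑ i, C i) ^ 2 := by
  intro m
  induction m with
  | zero =>
    intro f _ C _ lam hlam x z hpass y
    obtain ⟨w, hw0, hwl, -⟩ := hpass
    have hz : z = x := by rw [← hw0, ← hwl]; rfl
    simp [hz]
  | succ m ih =>
    intro f hfconv C hC lam hlam x z hpass y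
    obtain ⟨v, hv, hpass'⟩ := incPass_tail hpass
    have hC0 : ‖v‖ ≤ C 0 := hC 0 x v hv
    have hCnonneg : ∀ i, 0 ≤ C i := fun i => by
      obtain ⟨u, hu⟩ := exists_isSubgrad (hfconv i) 0
      exact (norm_nonneg u).trans (hC i 0 u hu)
    have hS' : (0:ℝ) ≤ ∑ i : Fin m, C i.succ :=
      Finset.sum_nonneg fun i _ => hCnonneg i.succ
    have hdist : ‖z - x‖ ≤ lam * ∑ i, C i := incPass_dist f C hC hlam hpass
    have hsum : (∑ i, C i) = C 0 + ∑ i : Fin m, C i.succ := Fin.sum_univ_succ C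
    rw [hsum] at hdist
    have hih := ih (fun i => f i.succ) (fun i => hfconv i.succ) (fun i => C i.succ)
      (fun i => hC i.succ) hlam hpass' y
    -- Lipschitz step
    have hlip : f 0 z - f 0 x ≤ C 0 * ‖z - x‖ :=
      lip_of_subgrad_bound (hfconv 0) (hC 0) z x
    -- norm expansion
    have hexp : ‖x - lam • v - y‖ ^ 2
        = ‖x - y‖ ^ 2 - 2 * lam * (inner ℝ v (x - y)) + lam ^ 2 * ‖v‖ ^ 2 := by
      have h0 : x - lam • v - y = (x - y) - lam • v := by abel
      rw [h0, norm_sub_sq_real, real_inner_smul_right, norm_smul, Real.norm_eq_abs,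
        abs_of_nonneg hlam, real_inner_comm]
      ring
    rw [hexp] at hih
    -- subgradient at x
    have hsg := hv y
    have hinner : (inner ℝ v (y - x) : ℝ) = - inner ℝ v (x - y) := by
      rw [← neg_sub x y, inner_neg_right]
    rw [ge_iff_le, hinner] at hsg
    -- C 0 * ‖z - x‖ ≤ C 0 * (lam * ∑ C)
    have e1 : C 0 * ‖z - x‖ ≤ C 0 * (lam * (C 0 + ∑ i : Fin m, C i.succ)) :=
      mul_le_mul_of_nonneg_left hdist (hCnonneg 0)
    have e2 : (f 0 z - f 0 y) - C 0 * (lam * (C 0 + ∑ i : Fin m, C i.succ)) ≤ inner ℝ v (x - y) := by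
      linarith
    have e3 : 2 * lam * ((f 0 z - f 0 y) - C 0 * (lam * (C 0 + ∑ i : Fin m, C i.succ)))
        ≤ 2 * lam * (inner ℝ v (x - y) : ℝ) :=
      mul_le_mul_of_nonneg_left e2 (by linarith)
    have hvsq : lam ^ 2 * ‖v‖ ^ 2 ≤ lam ^ 2 * C 0 ^ 2 := by
      apply mul_le_mul_of_nonneg_left _ (sq_nonneg lam)
      nlinarith [norm_nonneg v]
    rw [Fin.sum_univ_succ (fun i => f i z), Fin.sum_univ_succ (fun i => f i y), hsum]
    have hkey : (0:ℝ) ≤ lam ^ 2 * (C 0 * (∑ i : Fin m, C i.succ)) :=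
      mul_nonneg (sq_nonneg lam) (mul_nonneg (hCnonneg 0) hS')
    nlinarith [hih, e3, hvsq, hkey]

end Main

/-- The incremental subgradient inequality with the function value evaluated at
the output point of the pass. -/
theorem incremental_subgradient_inequality_at_output {n m : ℕ}
    (f : Fin m → (EuclideanSpace ℝ (Fin n) → ℝ))
    (hfconv : ∀ i, ConvexOn ℝ Set.univ (f i))
    (C : Fin m → ℝ) (hC : ∀ i, ∀ z v, IsSubgrad (f i) v z → ‖v‖ ≤ C i)
    (lam : ℝ) (hlam : 0 ≤ lam)
    (x z : EuclideanSpace ℝ (Fin n)) (hpass : IsIncPass f lam x z)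
    (y : EuclideanSpace ℝ (Fin n)) :
    ‖z - y‖ ^ 2 ≤ ‖x - y‖ ^ 2 - 2 * lam * ((∑ i, f i z) - ∑ i, f i y)
      + 3 * lam ^ 2 * (∑ i, C i) ^ 2 :=
  main_aux m f hfconv C hC hlam hpass y
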